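/- Let (D1, M) be a periodic first-derivative SBP operator with M symmetric positive definite and diagonal (M·D1 + D1ᵀ·M = 0), and let D2 be a periodic second-derivative SBP operator with the same mass matrix M (M·D2 = −A2, A2 symmetric positive semidefinite) such that D1 and D2 commute (D1·D2 = D2·D1). Let η, u : ℝ → ℝ^m be differentiable and satisfy the BBM-BBM semidiscretization ∂ₜη = −(I − D2)⁻¹·D1·(u + η∘u), ∂ₜu = −(I − D2)⁻¹·D1·(η + (1/2)·u∘u) for all t. Then the discrete Hamiltonian 𝓗(η(t), u(t)) = −(1/2)·(η(t)ᵀ·M·η(t) + u(t)ᵀ·M·((𝟙 + η(t))∘u(t))) is constant in t. -/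

import Mathlib

open Matrix

section Aux

variable {m : ℕ}

private lemma hasDerivAt_dot {f g : ℝ → Fin m → ℝ} {f' g' : Fin m → ℝ} {t : ℝ}
    (hf : HasDerivAt f f' t) (hg : HasDerivAt g g' t) :
    HasDerivAt (fun s => f s ⬝ᵥ g s) (f' ⬝ᵥ g t + f t ⬝ᵥ g') t := by
  simp only [dotProduct]
  rw [← Finset.sum_add_distrib]
  exact HasDerivAt.fun_sum fun i _ => (hasDerivAt_pi.mp hf i).mul (hasDerivAt_pi.mp hg i)

private lemma hasDerivAt_mulVec (A : Matrix (Fin m) (Fin m) ℝ) {f : ℝ → Fin m → ℝ}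
    {f' : Fin m → ℝ} {t : ℝ} (hf : HasDerivAt f f' t) :
    HasDerivAt (fun s => A *ᵥ f s) (A *ᵥ f') t := by
  rw [hasDerivAt_pi]
  intro i
  simp only [mulVec, dotProduct]
  exact HasDerivAt.fun_sum fun j _ => (hasDerivAt_pi.mp hf j).const_mul (A i j)

private lemma hasDerivAt_hadamard {f g : ℝ → Fin m → ℝ} {f' g' : Fin m → ℝ} {t : ℝ}
    (hf : HasDerivAt f f' t) (hg : HasDerivAt g g' t) :
    HasDerivAt (fun s => f s * g s) (f' * g t + f t * g') t := by
  rw [hasDerivAt_pi]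
  intro i
  exact (hasDerivAt_pi.mp hf i).mul (hasDerivAt_pi.mp hg i)

/-- For diagonal `M`, `x ⬝ᵥ M (y ∘ z) = y ⬝ᵥ M (x ∘ z)`. -/
private lemma diag_dot_comm {M : Matrix (Fin m) (Fin m) ℝ} (hMdiag : M.IsDiag)
    (x y z : Fin m → ℝ) : x ⬝ᵥ (M *ᵥ (y * z)) = y ⬝ᵥ (M *ᵥ (x * z)) := by
  have key : ∀ v w : Fin m → ℝ, v ⬝ᵥ (M *ᵥ w) = ∑ i, M i i * v i * w i := by
    intro v w
    simp only [dotProduct, mulVec, dotProduct]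
    refine Finset.sum_congr rfl fun i _ => ?_
    rw [Finset.sum_eq_single i (fun j _ hj => by rw [hMdiag (Ne.symm hj), zero_mul])
      (fun h => absurd (Finset.mem_univ i) h)]
    ring
  rw [key, key]
  refine Finset.sum_congr rfl fun i _ => ?_
  simp only [Pi.mul_apply]
  ring

private lemma sym_dot_comm {M : Matrix (Fin m) (Fin m) ℝ} (hMs : Mᵀ = M)
    (x y : Fin m → ℝ) : x ⬝ᵥ (M *ᵥ y) = y ⬝ᵥ (M *ᵥ x) := by
  rw [dotProduct_mulVec, dotProduct_comm, ← mulVec_transpose, hMs]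

private lemma mulVec_dot (A : Matrix (Fin m) (Fin m) ℝ) (x y : Fin m → ℝ) :
    (A *ᵥ x) ⬝ᵥ y = x ⬝ᵥ (Aᵀ *ᵥ y) := by
  rw [dotProduct_mulVec, vecMul_transpose]

end Aux

/-- The BBM-BBM semidiscretization
`∂ₜη = −(I − D2)⁻¹ D1 (u + η∘u)`, `∂ₜu = −(I − D2)⁻¹ D1 (η + (1/2) u∘u)`
with periodic SBP operators `D1`, `D2` sharing a diagonal symmetric positive
definite mass matrix `M` and with `D1 D2 = D2 D1` conserves the discrete
Hamiltonian `𝓗(η, u) = −(1/2)(ηᵀ M η + uᵀ M ((𝟙 + η)∘u))`. -/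
theorem bbm_bbm_conserves_hamiltonian
    (m : ℕ) (D1 D2 M A2 : Matrix (Fin m) (Fin m) ℝ)
    (hM : M.PosDef) (hMdiag : M.IsDiag)
    (hD1 : M * D1 + D1ᵀ * M = 0)
    (hA2 : A2.PosSemidef)
    (hD2 : M * D2 = -A2)
    (hcomm : D1 * D2 = D2 * D1)
    (η u : ℝ → Fin m → ℝ)
    (hη : ∀ t, HasDerivAt η (-((1 - D2)⁻¹ *ᵥ (D1 *ᵥ (u t + η t * u t)))) t)
    (hu : ∀ t, HasDerivAt u
      (-((1 - D2)⁻¹ *ᵥ (D1 *ᵥ (η t + (1 / 2 : ℝ) • (u t * u t))))) t) :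
    ∀ t₁ t₂ : ℝ,
      -(1 / 2 : ℝ) * (η t₁ ⬝ᵥ (M *ᵥ η t₁)
          + u t₁ ⬝ᵥ (M *ᵥ (((1 : Fin m → ℝ) + η t₁) * u t₁)))
        = -(1 / 2 : ℝ) * (η t₂ ⬝ᵥ (M *ᵥ η t₂)
          + u t₂ ⬝ᵥ (M *ᵥ (((1 : Fin m → ℝ) + η t₂) * u t₂))) := by
  -- Symmetry of M
  have hMs : Mᵀ = M := hM.1
  -- S = M + A2 is positive definite, hence invertible
  have hS : (M + A2).PosDef := hM.add_posSemidef hA2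
  -- M (1 - D2) = M + A2
  have hMD2 : M * (1 - D2) = M + A2 := by
    rw [mul_sub, mul_one, hD2, sub_neg_eq_add]
  -- 1 - D2 is invertible
  have hunit : IsUnit (1 - D2).det := by
    have h1 : IsUnit (M * (1 - D2)).det := by rw [hMD2]; exact hS.det_pos.ne'.isUnit
    rw [det_mul] at h1
    exact (IsUnit.mul_iff.mp h1).2
  -- (1 - D2)ᵀ M = M (1 - D2)
  have hsymrel : (1 - D2)ᵀ * M = M * (1 - D2) := by
    have hA2s : A2ᵀ = A2 := hA2.1
    have hD2tM : D2ᵀ * M = -A2 := by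
      rw [← hMs, ← transpose_mul, hD2, transpose_neg, hA2s]
    rw [transpose_sub, transpose_one, sub_mul, one_mul, hD2tM, hMD2, sub_neg_eq_add]
  -- K := M (1-D2)⁻¹ is symmetric
  set K := M * (1 - D2)⁻¹ with hK
  have hKs : Kᵀ = K := by
    have h1 : (1 - D2)ᵀ * K = M := by
      rw [hK, ← mul_assoc, hsymrel, mul_assoc, mul_nonsing_inv _ hunit, mul_one]
    have hunitT : IsUnit ((1 - D2)ᵀ).det := by rwa [det_transpose]
    have h2 : K = ((1 - D2)ᵀ)⁻¹ * M := by
      rw [← h1, ← mul_assoc, nonsing_inv_mul _ hunitT, one_mul]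
    rw [hK, transpose_mul, transpose_nonsing_inv, hMs, ← h2, hK]
  -- D1 commutes with (1 - D2)⁻¹
  have hcomm' : D1 * (1 - D2)⁻¹ = (1 - D2)⁻¹ * D1 := by
    have h : D1 * (1 - D2) = (1 - D2) * D1 := by
      rw [mul_sub, sub_mul, mul_one, one_mul, hcomm]
    calc D1 * (1 - D2)⁻¹ = (1 - D2)⁻¹ * ((1 - D2) * D1) * (1 - D2)⁻¹ := by
          rw [← mul_assoc (1 - D2)⁻¹, nonsing_inv_mul _ hunit, one_mul]
      _ = (1 - D2)⁻¹ * D1 * ((1 - D2) * (1 - D2)⁻¹) := by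
          rw [← h]; simp only [mul_assoc]
      _ = (1 - D2)⁻¹ * D1 := by rw [mul_nonsing_inv _ hunit, mul_one]
  -- MD1 = -D1ᵀ M
  have hMD1 : M * D1 = -(D1ᵀ * M) := eq_neg_of_add_eq_zero_left hD1
  -- N := M (1-D2)⁻¹ D1 is skew-symmetric
  set N := M * ((1 - D2)⁻¹ * D1) with hN
  have hNskew : Nᵀ = -N := by
    have h1 : N = K * D1 := by rw [hN, hK, mul_assoc]
    have h2 : N = -(D1ᵀ * K) := by
      rw [hN, ← hcomm', ← mul_assoc, hMD1, neg_mul, mul_assoc, hK]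
    calc Nᵀ = D1ᵀ * K := by rw [h1, transpose_mul, hKs]
      _ = -N := by rw [h2, neg_neg]
  -- The Hamiltonian as a function of time
  set H : ℝ → ℝ := fun s => -(1 / 2 : ℝ) * (η s ⬝ᵥ (M *ᵥ η s)
      + u s ⬝ᵥ (M *ᵥ (((1 : Fin m → ℝ) + η s) * u s))) with hH
  -- H has derivative zero everywhere
  have hderiv : ∀ t, HasDerivAt H 0 t := by
    intro t
    set B := (1 - D2)⁻¹ * D1 with hB
    set a := u t + η t * u t with ha
    set b := η t + (1 / 2 : ℝ) • (u t * u t) with hb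
    set e' : Fin m → ℝ := -((1 - D2)⁻¹ *ᵥ (D1 *ᵥ a)) with he'
    set v' : Fin m → ℝ := -((1 - D2)⁻¹ *ᵥ (D1 *ᵥ b)) with hv'
    have he'B : e' = -(B *ᵥ a) := by rw [he', hB, ← mulVec_mulVec]
    have hv'B : v' = -(B *ᵥ b) := by rw [hv', hB, ← mulVec_mulVec]
    have hηt : HasDerivAt η e' t := hη t
    have hut : HasDerivAt u v' t := hu t
    have hone : HasDerivAt (fun _ : ℝ => (1 : Fin m → ℝ)) 0 t := hasDerivAt_const t 1
    -- build the derivative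
    have hd : HasDerivAt H (-(1 / 2 : ℝ) * ((e' ⬝ᵥ (M *ᵥ η t) + η t ⬝ᵥ (M *ᵥ e'))
        + (v' ⬝ᵥ (M *ᵥ (((1 : Fin m → ℝ) + η t) * u t))
          + u t ⬝ᵥ (M *ᵥ ((0 + e') * u t + ((1 : Fin m → ℝ) + η t) * v'))))) t := by
      refine HasDerivAt.const_mul _ ?_
      exact (hasDerivAt_dot hηt (hasDerivAt_mulVec M hηt)).add
        (hasDerivAt_dot hut (hasDerivAt_mulVec M
          (hasDerivAt_hadamard (hone.add hηt) hut)))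
    have hzero : (e' ⬝ᵥ (M *ᵥ η t) + η t ⬝ᵥ (M *ᵥ e'))
        + (v' ⬝ᵥ (M *ᵥ (((1 : Fin m → ℝ) + η t) * u t))
          + u t ⬝ᵥ (M *ᵥ ((0 + e') * u t + ((1 : Fin m → ℝ) + η t) * v'))) = 0 := by
      have h1eta : ((1 : Fin m → ℝ) + η t) * u t = a := by
        rw [ha]; funext i; simp [Pi.add_apply, Pi.mul_apply]; ring
      have hsym1 : η t ⬝ᵥ (M *ᵥ e') = e' ⬝ᵥ (M *ᵥ η t) := sym_dot_comm hMs _ _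
      have hdist : M *ᵥ ((0 + e') * u t + ((1 : Fin m → ℝ) + η t) * v')
          = M *ᵥ (e' * u t) + M *ᵥ (((1 : Fin m → ℝ) + η t) * v') := by
        rw [zero_add, mulVec_add]
      have hdiag1 : u t ⬝ᵥ (M *ᵥ (e' * u t)) = e' ⬝ᵥ (M *ᵥ (u t * u t)) :=
        diag_dot_comm hMdiag _ _ _
      have hdiag2 : u t ⬝ᵥ (M *ᵥ (((1 : Fin m → ℝ) + η t) * v'))
          = v' ⬝ᵥ (M *ᵥ (((1 : Fin m → ℝ) + η t) * u t)) := by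
        rw [mul_comm ((1 : Fin m → ℝ) + η t) v', diag_dot_comm hMdiag (u t) v',
          mul_comm (u t) ((1 : Fin m → ℝ) + η t)]
      rw [hsym1, hdist, dotProduct_add, hdiag1, hdiag2, h1eta]
      -- now: 2 e' ⬝ M η + e' ⬝ M (u*u) + 2 v' ⬝ M a = 0
      have hMb : M *ᵥ b = M *ᵥ η t + (1 / 2 : ℝ) • (M *ᵥ (u t * u t)) := by
        rw [hb, mulVec_add, mulVec_smul]
      have he'b : e' ⬝ᵥ (M *ᵥ b) = e' ⬝ᵥ (M *ᵥ η t)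
          + (1 / 2 : ℝ) * (e' ⬝ᵥ (M *ᵥ (u t * u t))) := by
        rw [hMb, dotProduct_add, dotProduct_smul, smul_eq_mul]
      have hkey : e' ⬝ᵥ (M *ᵥ b) + v' ⬝ᵥ (M *ᵥ a) = 0 := by
        have hNB : N = M * B := by rw [hN, hB]
        have hBtM : Bᵀ * M = -N := by
          have hNt : Nᵀ = Bᵀ * Mᵀ := by rw [hNB, transpose_mul]
          rw [← hMs, ← hNt, hNskew]
        have hh1 : e' ⬝ᵥ (M *ᵥ b) = a ⬝ᵥ (N *ᵥ b) := by
          rw [he'B, neg_dotProduct, mulVec_dot, mulVec_mulVec, hBtM, neg_mulVec,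
            dotProduct_neg, neg_neg]
        have hh2 : v' ⬝ᵥ (M *ᵥ a) = -(a ⬝ᵥ (N *ᵥ b)) := by
          rw [hv'B, neg_dotProduct, mulVec_dot, mulVec_mulVec, hBtM, neg_mulVec,
            dotProduct_neg, neg_neg, dotProduct_comm, mulVec_dot,
            hNskew, neg_mulVec, dotProduct_neg]
        rw [hh1, hh2]; ring
      linarith [he'b, hkey]
    rw [hzero, mul_zero] at hd
    exact hd
  -- conclude: H is constant
  intro t₁ t₂
  have := is_const_of_deriv_eq_zero (f := H)
    (fun t => (hderiv t).differentiableAt) (fun t => (hderiv t).deriv) t₁ t₂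
  simpa [hH] using this
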